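/- If c is a unitary central element of A (c* = c⁻¹), then ĉ(g) = c (g ▷ c⁻¹) satisfies the unitarity condition ĉ(g₍₁₎)(ĉ(S(g₍₂₎)*))* = ε(g)1_A, i.e. ĉ ∈ U(H, A). -/
import Mathlib


open scoped TensorProduct

/-- A choice of a finite "Sweedler representation" of the comultiplication:
`Δ g = ∑ₚ p.1 ⊗ p.2` where `p` ranges over the list `rep g`. -/
structure SweedlerRep (C H : Type*) [CommSemiring C] [AddCommMonoid H] [Module C H]
    [CoalgebraStruct C H] where
  rep : H → List (H × H)
  rep_spec : ∀ g : H,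
    Coalgebra.comul (R := C) g = ((rep g).map fun p => p.1 ⊗ₜ[C] p.2).sum

/-- If `c` is a unitary central element of `A` (`c* = c⁻¹`), then
`ĉ(g) = c (g ▷ c⁻¹) = c (g ▷ c*)` satisfies the unitarity condition
`ĉ(g₍₁₎)(ĉ(S(g₍₂₎)*))* = ε(g)·1`, i.e. `ĉ ∈ U(H, A)`. -/
theorem central_unitary_hat_unitarity
    {C H A : Type*} [CommRing C] [StarRing C]
    [Ring H] [HopfAlgebra C H] [StarRing H] [StarModule C H]
    [Ring A] [Algebra C A] [StarRing A] [StarModule C A]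
    (Δ : SweedlerRep C H)
    -- `S(S(g)*)* = g`
    (hS : ∀ g : H,
      star (HopfAlgebra.antipode (R := C)
        (star (HopfAlgebra.antipode (R := C) g))) = g)
    -- `act` is a `*`-action of `H` on the unital `*`-algebra `A`
    (act : H → A → A)
    (hact_one : ∀ a, act 1 a = a)
    (hact_mulH : ∀ g h a, act (g * h) a = act g (act h a))
    (hact_lin : ∀ a : A, IsLinearMap C fun g => act g a)
    (hact_linA : ∀ g : H, IsLinearMap C (act g))
    (hact_alg : ∀ (g : H) (a b : A), act g (a * b) =
      ((Δ.rep g).map fun p => act p.1 a * act p.2 b).sum)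
    (hact_star : ∀ g a, star (act g a) =
      act (star (HopfAlgebra.antipode (R := C) g)) (star a))
    (hact_unit : ∀ g : H, act g (1 : A) = Coalgebra.counit (R := C) g • (1 : A))
    -- `c` is a unitary central element of `A`
    (c : A)
    (hc_unitary₁ : star c * c = 1)
    (hc_unitary₂ : c * star c = 1)
    (hc_central : ∀ b : A, c * b = b * c) :
    -- the unitarity condition for `ĉ(g) = c (g ▷ c*)`
    ∀ g : H,
      ((Δ.rep g).map fun p =>
          (c * act p.1 (star c)) *
            star (c * act (star (HopfAlgebra.antipode (R := C) p.2)) (star c))).sum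
        = Coalgebra.counit (R := C) g • (1 : A) := by
  intro g
  have hterm : ∀ p : H × H,
      (c * act p.1 (star c)) *
        star (c * act (star (HopfAlgebra.antipode (R := C) p.2)) (star c))
      = c * (act p.1 (star c) * act p.2 c) * star c := by
    intro p
    rw [star_mul, hact_star, star_star, hS]
    simp only [mul_assoc]
  have key : ((Δ.rep g).map fun p => act p.1 (star c) * act p.2 c).sum
      = Coalgebra.counit (R := C) g • (1 : A) := by
    rw [← hact_alg, hc_unitary₁, hact_unit]
  calc ((Δ.rep g).map fun p =>
          (c * act p.1 (star c)) *
            star (c * act (star (HopfAlgebra.antipode (R := C) p.2)) (star c))).sum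
      = ((Δ.rep g).map fun p =>
          c * (act p.1 (star c) * act p.2 c) * star c).sum := by
        congr 1; exact List.map_congr_left fun p _ => hterm p
    _ = c * ((Δ.rep g).map fun p => act p.1 (star c) * act p.2 c).sum * star c := by
        induction Δ.rep g with
        | nil => simp
        | cons h t ih => simp [ih, mul_add, add_mul]
    _ = Coalgebra.counit (R := C) g • (1 : A) := by
        rw [key, mul_smul_comm, smul_mul_assoc, mul_one, hc_unitary₂]
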